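/- Consider tuples (τ_s, τ_o, π_s, π_o, α_s, α_o) where τ_s, τ_o are histories, π_s, π_o ∈ ℕ, and α_s, α_o ∈ O. Say Inv holds of such a tuple iff: ω τ_s ↔ (α_s = own); ω τ_o ↔ (α_o = own); π_s = 1 if α_s = own and π_s = 0 otherwise; π_o = 1 if α_o = own and π_o = 0 otherwise; and τ_s ⊥_ω τ_o. Suppose Inv holds of (τ_s, τ_o, π_s, π_o, α_s, α_o) and the coupled lock/open transition fires: ω(τ_s ⊎ τ_o) fails, α_s = ōwn, and the post-state is τ_s' = τ_s ⊎ (fresh(τ_s ⊎ τ_o) ↦ L), π_s' = π_s + 1, α_s' = own, with τ_o, π_o, α_o unchanged. Then τ_s' is disjoint from τ_o, and Inv holds of the post-state; in particular τ_s' ⊥_ω τ_o. -/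

import Mathlib

/-- The two operations recorded in lock histories. -/
inductive LU | L | U deriving DecidableEq

/-- A history: a finite map from positive timestamps to `{L, U}`. -/
abbrev Hist := Finmap (fun _ : ℕ+ => LU)

/-- `last_stamp h = max ({0} ∪ dom h)`. -/
noncomputable def lastStamp (h : Hist) : ℕ := h.keys.sup (fun t => (t : ℕ))

/-- `last_op h` is `h (last_stamp h)` if `last_stamp h ≠ 0`, and `U` otherwise. -/
noncomputable def lastOp (h : Hist) : LU :=
  if hpos : 0 < lastStamp h then (h.lookup ⟨lastStamp h, hpos⟩).getD LU.U else LU.U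

/-- `ω h` holds iff the last operation of `h` is a lock. -/
noncomputable def omega (h : Hist) : Prop := lastOp h = LU.L

/-- `fresh h = 1 + last_stamp h`, as a positive timestamp. -/
noncomputable def freshStamp (h : Hist) : ℕ+ := ⟨lastStamp h + 1, Nat.succ_pos _⟩

/-- `x ⊥_ω y`. -/
noncomputable def sepOmega (x y : Hist) : Prop :=
  (omega x → lastStamp y < lastStamp x) ∧
  (omega y → lastStamp x < lastStamp y) ∧
  x.Disjoint y
/-- Ownership values: `own` and `ōwn` (not owned). -/
inductive Own | own | nown deriving DecidableEq
/-- The invariant `SpinCSLInv` of the combined Spin/CSLX resource on the tuple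
`(τ_s, τ_o, π_s, π_o, α_s, α_o)`. -/
noncomputable def SpinCSLInv (τs τo : Hist) (πs πo : ℕ) (αs αo : Own) : Prop :=
  (omega τs ↔ αs = Own.own) ∧
  (omega τo ↔ αo = Own.own) ∧
  (πs = if αs = Own.own then 1 else 0) ∧
  (πo = if αo = Own.own then 1 else 0) ∧
  sepOmega τs τo

lemma le_lastStamp_of_mem {h : Hist} {k : ℕ+} (hk : k ∈ h) : (k : ℕ) ≤ lastStamp h :=
  Finset.le_sup (Finmap.mem_keys.mpr hk)

lemma lastStamp_mem {h : Hist} (hp : 0 < lastStamp h) : (⟨lastStamp h, hp⟩ : ℕ+) ∈ h := by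
  have hne : h.keys.Nonempty := by
    by_contra hemp
    rw [Finset.not_nonempty_iff_eq_empty] at hemp
    simp [lastStamp, hemp] at hp
  obtain ⟨k, hk, hkeq⟩ := Finset.exists_mem_eq_sup h.keys hne (fun t => (t : ℕ))
  have : (⟨lastStamp h, hp⟩ : ℕ+) = k := by
    ext
    exact hkeq
  rw [this]
  exact Finmap.mem_keys.mp hk

lemma lastStamp_union (x y : Hist) :
    lastStamp (x ∪ y) = max (lastStamp x) (lastStamp y) := by
  simp [lastStamp, Finmap.keys_union, Finset.sup_union]

lemma omega_union_right {x y : Hist} (hy : omega y) (hlt : lastStamp x < lastStamp y) :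
    omega (x ∪ y) := by
  have hp : 0 < lastStamp y := lt_of_le_of_lt (Nat.zero_le _) hlt
  have hLS : lastStamp (x ∪ y) = lastStamp y := by
    rw [lastStamp_union]; omega
  have hp' : 0 < lastStamp (x ∪ y) := hLS ▸ hp
  have hk : (⟨lastStamp y, hp⟩ : ℕ+) ∉ x := fun hmem => by
    have := le_lastStamp_of_mem hmem; simp at this; omega
  unfold omega lastOp at hy ⊢
  rw [dif_pos hp'] at *
  rw [dif_pos hp] at hy
  have hkey : (⟨lastStamp (x ∪ y), hp'⟩ : ℕ+) = ⟨lastStamp y, hp⟩ := by ext; simp [hLS]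
  rw [hkey]; erw [Finmap.lookup_union_right hk]
  exact hy

/-- the coupled lock/open transition preserves `SpinCSLInv`:
if `SpinCSLInv` holds, `ω (τ_s ⊎ τ_o)` fails and `α_s = ōwn`, then the post-state
`τ_s' = τ_s ⊎ (fresh (τ_s ⊎ τ_o) ↦ L)`, `π_s' = π_s + 1`, `α_s' = own`
(with `τ_o`, `π_o`, `α_o` unchanged) has `τ_s'` disjoint from `τ_o` and
satisfies `SpinCSLInv`; in particular `τ_s' ⊥_ω τ_o`. -/
theorem lock_open_preserves_Inv (τs τo : Hist) (πs πo : ℕ) (αs αo : Own)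
    (hInv : SpinCSLInv τs τo πs πo αs αo)
    (hω : ¬ omega (τs ∪ τo)) (hα : αs = Own.nown) :
    (τs ∪ Finmap.singleton (freshStamp (τs ∪ τo)) LU.L).Disjoint τo ∧
    SpinCSLInv (τs ∪ Finmap.singleton (freshStamp (τs ∪ τo)) LU.L) τo (πs + 1) πo Own.own αo ∧
    sepOmega (τs ∪ Finmap.singleton (freshStamp (τs ∪ τo)) LU.L) τo := by
  obtain ⟨hωs, hωo, hπs, hπo, hsep⟩ := hInv
  obtain ⟨hso, hos, hdisj⟩ := hsep
  set f := freshStamp (τs ∪ τo) with hf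
  have hfval : (f : ℕ) = lastStamp (τs ∪ τo) + 1 := rfl
  have hLSu : lastStamp (τs ∪ τo) = max (lastStamp τs) (lastStamp τo) := lastStamp_union _ _
  have hfs : f ∉ τs := fun hmem => by
    have := le_lastStamp_of_mem hmem; rw [hfval] at this; omega
  have hfo : f ∉ τo := fun hmem => by
    have := le_lastStamp_of_mem hmem; rw [hfval] at this; omega
  -- ¬ omega τo
  have hnωo : ¬ omega τo := fun h => hω (omega_union_right h (hos h))
  have hαo : αo = Own.nown := by
    cases αo with
    | own => exact absurd (hωo.mpr rfl) hnωo
    | nown => rfl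
  -- disjointness
  have hdisj' : (τs ∪ Finmap.singleton f LU.L).Disjoint τo := by
    intro k hk hko
    rw [Finmap.mem_union] at hk
    rcases hk with hk | hk
    · exact hdisj k hk hko
    · rw [Finmap.mem_singleton] at hk
      exact hfo (hk ▸ hko)
  -- lastStamp of new τs
  have hLS' : lastStamp (τs ∪ Finmap.singleton f LU.L) = (f : ℕ) := by
    rw [lastStamp_union]
    have : lastStamp (Finmap.singleton f LU.L) = (f : ℕ) := by
      simp [lastStamp, Finmap.keys_singleton]
    rw [this, hfval]
    omega
  have hp' : 0 < lastStamp (τs ∪ Finmap.singleton f LU.L) := by rw [hLS']; exact f.pos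
  have hω' : omega (τs ∪ Finmap.singleton f LU.L) := by
    unfold omega lastOp
    rw [dif_pos hp']
    have hkey : (⟨lastStamp (τs ∪ Finmap.singleton f LU.L), hp'⟩ : ℕ+) = f := by
      ext; exact hLS'
    rw [hkey, Finmap.lookup_union_right hfs, Finmap.lookup_singleton_eq]
    rfl
  have hαs' : αs ≠ Own.own := by rw [hα]; intro h; cases h
  have hlt : lastStamp τo < lastStamp (τs ∪ Finmap.singleton f LU.L) := by
    rw [hLS', hfval]; omega
  have hsep' : sepOmega (τs ∪ Finmap.singleton f LU.L) τo :=
    ⟨fun _ => hlt, fun h => absurd h hnωo, hdisj'⟩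
  refine ⟨hdisj', ⟨⟨fun _ => rfl, fun _ => hω'⟩, hωo, ?_, hπo, hsep'⟩, hsep'⟩
  simp [hπs, hαs', hα]
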